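/- Let A be a real n×n matrix having 1 as an eigenvalue, i.e., (t − 1) divides the characteristic polynomial of A over ℝ. Then there exists a real number k ≥ 0 and an entrywise nonnegative real n×n matrix B with every row sum and every column sum equal to 1 + k such that charpoly(B)·(t − 1) = charpoly(A)·(t − (1 + k)); that is, the eigenvalue multiset of B is obtained from that of A by replacing one occurrence of the eigenvalue 1 by 1 + k. -/

import Mathlib

open Polynomial Matrix

/-- There exists a real matrix with any prescribed monic characteristic polynomial. -/
lemma aux_exists_matrix_charpoly (p : ℝ[X]) (hp : p.Monic) :
    ∃ M : Matrix (Fin p.natDegree) (Fin p.natDegree) ℝ, M.charpoly = p := by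
  have hp0 : p ≠ 0 := hp.ne_zero
  refine ⟨Algebra.leftMulMatrix (AdjoinRoot.powerBasis' hp).basis
    (AdjoinRoot.powerBasis' hp).gen, ?_⟩
  show (Algebra.leftMulMatrix (AdjoinRoot.powerBasis' hp).basis
    (AdjoinRoot.powerBasis' hp).gen).charpoly = p
  rw [charpoly_leftMulMatrix, AdjoinRoot.powerBasis'_gen, AdjoinRoot.minpoly_root hp0,
    hp.leadingCoeff, inv_one, Polynomial.C_1, mul_one]

/-- Characteristic polynomial is invariant under conjugation by an involution. -/
lemma aux_charpoly_conj {N : ℕ} (H D : Matrix (Fin N) (Fin N) ℝ) (h : H * H = 1) :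
    (H * D * H).charpoly = D.charpoly := by
  have hc : H.map (C : ℝ →+* ℝ[X]) * H.map C = 1 := by
    rw [← Matrix.map_mul, h, Matrix.map_one C C_0 C_1]
  have hs := (scalar_commute (n := Fin N) X (Commute.all X) (H.map C)).eq
  have key : charmatrix (H * D * H) = H.map C * charmatrix D * H.map C := by
    rw [charmatrix, charmatrix, RingHom.mapMatrix_apply, RingHom.mapMatrix_apply]
    rw [Matrix.mul_sub, Matrix.sub_mul]
    congr 1
    · rw [← hs, Matrix.mul_assoc, hc, Matrix.mul_one]
    · rw [Matrix.map_mul, Matrix.map_mul]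
  rw [Matrix.charpoly, Matrix.charpoly, key, Matrix.det_mul, Matrix.det_mul]
  have h2 : (H.map (C : ℝ →+* ℝ[X])).det * (H.map C).det = 1 := by
    rw [← Matrix.det_mul, hc, Matrix.det_one]
  calc (H.map (C : ℝ →+* ℝ[X])).det * (charmatrix D).det * (H.map C).det
      = (H.map C).det * (H.map C).det * (charmatrix D).det := by ring
    _ = (charmatrix D).det := by rw [h2, one_mul]

lemma aux_mul_vecMulVec_mul {N : ℕ} (H K : Matrix (Fin N) (Fin N) ℝ) (a b : Fin N → ℝ) :
    H * vecMulVec a b * K = vecMulVec (H *ᵥ a) (b ᵥ* K) := by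
  ext i j
  simp only [Matrix.mul_apply, vecMulVec_apply, mulVec, vecMul, dotProduct,
    Finset.sum_mul, Finset.mul_sum]
  refine Finset.sum_congr rfl fun k _ => Finset.sum_congr rfl fun l _ => by ring

/-- A Householder-type symmetric involution whose first column is constant `1/√(m+1)`. -/
lemma aux_householder (m : ℕ) :
    ∃ H : Matrix (Fin (m + 1)) (Fin (m + 1)) ℝ,
      H * H = 1 ∧ Hᵀ = H ∧ (∀ i, H i 0 = (Real.sqrt ((m : ℝ) + 1))⁻¹) := by
  rcases m with _ | m
  · refine ⟨1, by rw [mul_one], transpose_one, fun i => ?_⟩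
    have : i = 0 := Fin.ext (by omega)
    subst this
    norm_num [Matrix.one_apply]
  · -- m + 2 ≥ 2
    set N : ℕ := m + 1 + 1 with hN
    have hN2 : (2 : ℝ) ≤ (N : ℝ) := by push_cast [hN]; linarith
    set q : ℝ := Real.sqrt N with hqdef
    have hq2 : q * q = N := Real.mul_self_sqrt (by positivity)
    have hq0 : 0 < q := Real.sqrt_pos.2 (by positivity)
    have hq1 : 1 < q := by nlinarith
    set r : ℝ := q⁻¹ with hrdef
    have hqr : q * r = 1 := mul_inv_cancel₀ (ne_of_gt hq0)
    have hr0 : 0 < r := by positivity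
    have hr1 : r < 1 := by
      rw [hrdef, inv_lt_one_iff₀]; right; exact hq1
    set t : ℝ := 1 - r with htdef
    have ht0 : 0 < t := by simp [htdef]; linarith
    set c : ℝ := t⁻¹ with hcdef
    have hct : c * t = 1 := inv_mul_cancel₀ (ne_of_gt ht0)
    set w : Fin N → ℝ := fun i => (if i = 0 then 1 else 0) - r with hwdef
    have hrr : (N : ℝ) * (r * r) = 1 := by
      rw [hrdef, ← hq2]; field_simp
    have hS : ∑ k, w k * w k = 2 * t := by
      have hterm : ∀ k : Fin N, w k * w k
          = if k = 0 then (1 - r) * (1 - r) else r * r := by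
        intro k; by_cases h : k = 0 <;> simp [hwdef, h] <;> ring
      rw [Finset.sum_congr rfl fun k _ => hterm k]
      rw [Fin.sum_univ_succ]
      simp only [if_pos rfl, Fin.succ_ne_zero, if_neg, not_false_iff, Finset.sum_const,
        Finset.card_univ, Fintype.card_fin, nsmul_eq_mul]
      rw [htdef]
      have hN' : (N : ℝ) = (m : ℝ) + 2 := by push_cast [hN]; ring
      rw [hN'] at hrr
      push_cast
      linear_combination hrr
    refine ⟨Matrix.of fun i j => (if i = j then 1 else 0) - c * (w i * w j), ?_, ?_, ?_⟩
    · ext i j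
      rw [Matrix.mul_apply]
      have expand : ∑ k, (Matrix.of fun i j => (if i = j then (1:ℝ) else 0) - c * (w i * w j)) i k *
            (Matrix.of fun i j => (if i = j then (1:ℝ) else 0) - c * (w i * w j)) k j
          = (∑ k, (if i = k then (1:ℝ) else 0) * (if k = j then 1 else 0))
            - c * w i * (∑ k, (if k = j then (1:ℝ) else 0) * w k)
            - (∑ k, (if i = k then (1:ℝ) else 0) * w k) * (c * w j)
            + (c * w i) * (c * w j) * (∑ k, w k * w k) := by
        rw [Finset.mul_sum, Finset.sum_mul, Finset.mul_sum, ← Finset.sum_sub_distrib,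
          ← Finset.sum_sub_distrib, ← Finset.sum_add_distrib]
        refine Finset.sum_congr rfl fun k _ => ?_
        simp only [Matrix.of_apply]; ring
      rw [expand, hS]
      have h1 : ∑ k, (if i = k then (1:ℝ) else 0) * (if k = j then 1 else 0)
          = if i = j then 1 else 0 := by
        simp [ite_and]
      have h2 : ∑ k, (if k = j then (1:ℝ) else 0) * w k = w j := by simp
      have h3 : ∑ k, (if i = k then (1:ℝ) else 0) * w k = w i := by simp
      rw [h1, h2, h3, Matrix.one_apply]
      linear_combination (2 * c * w i * w j) * hct
    · ext i j
      simp only [transpose_apply, Matrix.of_apply]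
      congr 1
      · simp [eq_comm]
      · ring
    · intro i
      have hw0 : w 0 = t := by simp [hwdef, htdef]
      by_cases h : i = 0
      · subst h
        simp only [Matrix.of_apply, if_pos rfl, hw0]
        have : c * (t * t) = t := by
          calc c * (t * t) = (c * t) * t := by ring
          _ = t := by rw [hct, one_mul]
        rw [this]
        have hcast : ((m + 1 : ℕ) : ℝ) + 1 = (N : ℝ) := by push_cast [hN]; ring
        rw [hcast, ← hqdef, ← hrdef, htdef]
        norm_num
      · have hwi : w i = -r := by simp [hwdef, h]
        simp only [Matrix.of_apply, if_neg h, hwi, hw0]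
        have : c * (-r * t) = -r := by
          calc c * (-r * t) = (c * t) * (-r) := by ring
          _ = -r := by rw [hct, one_mul]
        rw [this]
        have hcast : ((m + 1 : ℕ) : ℝ) + 1 = (N : ℝ) := by push_cast [hN]; ring
        rw [hcast, ← hqdef, ← hrdef]
        ring

theorem stmt15 (n : ℕ) (A : Matrix (Fin n) (Fin n) ℝ)
    (h1 : (X - C 1) ∣ A.charpoly) :
    ∃ k : ℝ, 0 ≤ k ∧
      ∃ B : Matrix (Fin n) (Fin n) ℝ,
        (∀ i j, 0 ≤ B i j) ∧
        (∀ i, ∑ j, B i j = 1 + k) ∧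
        (∀ j, ∑ i, B i j = 1 + k) ∧
        B.charpoly * (X - C 1) = A.charpoly * (X - C (1 + k)) := by
  rcases n with _ | m
  · exfalso
    have hA : A.charpoly = 1 := by rw [Matrix.charpoly]; exact Matrix.det_isEmpty
    rw [hA] at h1
    exact Polynomial.not_isUnit_X_sub_C (1 : ℝ) (isUnit_of_dvd_one h1)
  obtain ⟨p, hp⟩ := h1
  have hmono : A.charpoly.Monic := A.charpoly_monic
  have hXC : (X - C (1 : ℝ)).Monic := monic_X_sub_C 1
  have hpm : p.Monic := by
    have h := hp ▸ hmono
    exact hXC.of_mul_monic_left h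
  have hdeg : p.natDegree = m := by
    have hd : A.charpoly.natDegree = m + 1 := by
      rw [Matrix.charpoly_natDegree_eq_dim, Fintype.card_fin]
    rw [hp, hXC.natDegree_mul hpm, natDegree_X_sub_C] at hd
    omega
  obtain ⟨M0, hM0⟩ := aux_exists_matrix_charpoly p hpm
  set M : Matrix (Fin m) (Fin m) ℝ := reindex (finCongr hdeg) (finCongr hdeg) M0 with hMdef
  have hM : M.charpoly = p := by rw [hMdef, Matrix.charpoly_reindex, hM0]
  obtain ⟨H, hHH, hHsym, hHcol⟩ := aux_householder m
  set q : ℝ := Real.sqrt ((m : ℝ) + 1) with hqdef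
  set r : ℝ := q⁻¹ with hrdef
  have hq0 : 0 < q := Real.sqrt_pos.2 (by positivity)
  have hqr : q * r = 1 := mul_inv_cancel₀ hq0.ne'
  have hq2 : q * q = (m : ℝ) + 1 := Real.mul_self_sqrt (by positivity)
  have hrr : ((m : ℝ) + 1) * (r * r) = 1 := by
    rw [hrdef, ← hq2]; field_simp
  set e : (Fin 1 ⊕ Fin m) ≃ Fin (m + 1) := finSumFinEquiv.trans (finCongr (Nat.add_comm 1 m))
    with hedef
  have he0 : e (Sum.inl 0) = 0 := by apply Fin.ext; simp [hedef]
  have hsymm0 : e.symm 0 = Sum.inl 0 := by rw [← he0, Equiv.symm_apply_apply]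
  have hcases : ∀ i : Fin (m + 1),
      (i = 0 ∧ e.symm i = Sum.inl 0) ∨ (∃ x, e.symm i = Sum.inr x ∧ i ≠ 0) := by
    intro i
    rcases h : e.symm i with x | x
    · left
      have hx : x = 0 := Fin.ext (by omega)
      have hi : i = 0 := by rw [← Equiv.apply_symm_apply e i, h, hx, he0]
      exact ⟨hi, by rw [hx]⟩
    · right
      refine ⟨x, rfl, fun hi => ?_⟩
      rw [hi, hsymm0] at h
      cases h
  set D0 : Matrix (Fin (m + 1)) (Fin (m + 1)) ℝ := reindex e e (fromBlocks 0 0 0 M) with hD0def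
  set G := H * D0 * H with hGdef
  set T : ℝ := ∑ i, ∑ j, |G i j| with hTdef
  have hT0 : 0 ≤ T :=
    Finset.sum_nonneg fun _ _ => Finset.sum_nonneg fun _ _ => abs_nonneg _
  set k : ℝ := ((m : ℝ) + 1) * T with hkdef
  have hk0 : 0 ≤ k := by positivity
  set s : ℝ := 1 + k with hsdef
  set D : Matrix (Fin (m + 1)) (Fin (m + 1)) ℝ :=
    reindex e e (fromBlocks (Matrix.of fun _ _ => s) 0 0 M) with hDdef
  set B := H * D * H with hBdef
  -- entry lemmas
  have hDD0 : ∀ i j, D i j = D0 i j + s * ((if i = 0 then 1 else 0) * (if j = 0 then 1 else 0)) := by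
    intro i j
    rcases hcases i with ⟨hi, hsi⟩ | ⟨x, hsi, hi⟩ <;>
      rcases hcases j with ⟨hj, hsj⟩ | ⟨y, hsj, hj⟩ <;>
      simp [hDdef, hD0def, Matrix.reindex_apply, Matrix.submatrix_apply, hsi, hsj, hi, hj, hsymm0]
  have hD00 : D 0 0 = s := by
    rw [hDD0, hD0def]; simp [Matrix.reindex_apply, Matrix.submatrix_apply, hsymm0]
  have hDi0 : ∀ i, i ≠ 0 → D i 0 = 0 := by
    intro i hi
    rcases hcases i with ⟨h, _⟩ | ⟨x, hsi, _⟩; · exact absurd h hi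
    rw [hDD0, hD0def]
    simp [Matrix.reindex_apply, Matrix.submatrix_apply, hsi, hi, hsymm0]
  have hD0j : ∀ j, j ≠ 0 → D 0 j = 0 := by
    intro j hj
    rcases hcases j with ⟨h, _⟩ | ⟨y, hsj, _⟩; · exact absurd h hj
    rw [hDD0, hD0def]
    simp [Matrix.reindex_apply, Matrix.submatrix_apply, hsymm0, hsj, hj]
  -- vector lemmas
  set dl : Fin (m + 1) → ℝ := fun i0 => if i0 = 0 then 1 else 0 with hdldef
  set u : Fin (m + 1) → ℝ := fun _ => r with hudef
  have hvH : ∀ v : Fin (m + 1) → ℝ, v ᵥ* H = H *ᵥ v := by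
    intro v
    conv_lhs => rw [← hHsym]
    rw [Matrix.vecMul_transpose]
  have hHdl : H *ᵥ dl = u := by
    ext i
    have h2 : (H *ᵥ dl) i = H i 0 := by
      simp [hdldef, Matrix.mulVec, dotProduct, mul_ite]
    rw [h2, hudef]
    exact hHcol i
  have hdlH : dl ᵥ* H = u := by rw [hvH, hHdl]
  have hHu : H *ᵥ u = dl := by
    rw [← hHdl, Matrix.mulVec_mulVec, hHH, Matrix.one_mulVec]
  have hDdl : D *ᵥ dl = s • dl := by
    ext i
    have h2 : (D *ᵥ dl) i = D i 0 := by
      simp [hdldef, Matrix.mulVec, dotProduct, mul_ite]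
    rw [h2]
    by_cases hi : i = 0
    · subst hi; rw [hD00]; simp [hdldef]
    · rw [hDi0 i hi]; simp [hdldef, hi]
  have hdlD : dl ᵥ* D = s • dl := by
    ext j
    have h2 : (dl ᵥ* D) j = D 0 j := by
      simp [hdldef, Matrix.vecMul, dotProduct, ite_mul]
    rw [h2]
    by_cases hj : j = 0
    · subst hj; rw [hD00]; simp [hdldef]
    · rw [hD0j j hj]; simp [hdldef, hj]
  have hones : (fun (_ : Fin (m + 1)) => (1 : ℝ)) = q • u := by
    ext i; simp [hudef, smul_eq_mul, hqr]
  -- entrywise decomposition of B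
  have hBsplit : ∀ i j, B i j = G i j + s * (r * r) := by
    intro i j
    have h1 : D = D0 + s • vecMulVec dl dl := by
      ext a b
      rw [hDD0]
      simp [hdldef, Matrix.vecMulVec_apply]
    have h2 : B = G + s • vecMulVec u u := by
      rw [hBdef, h1, Matrix.mul_add, Matrix.add_mul, Matrix.mul_smul,
        Matrix.smul_mul, aux_mul_vecMulVec_mul, hHdl, hdlH, hGdef]
    rw [h2]
    simp [Matrix.add_apply, Matrix.smul_apply, Matrix.vecMulVec_apply, hudef, smul_eq_mul]
  have habs : ∀ i j, |G i j| ≤ T := by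
    intro i j
    calc |G i j| ≤ ∑ j', |G i j'| :=
          Finset.single_le_sum (f := fun j' => |G i j'|)
            (fun _ _ => abs_nonneg _) (Finset.mem_univ j)
      _ ≤ T :=
          Finset.single_le_sum (f := fun i' => ∑ j', |G i' j'|)
            (fun _ _ => Finset.sum_nonneg fun _ _ => abs_nonneg _) (Finset.mem_univ i)
  have hsrr : s * (r * r) = r * r + T := by
    rw [hsdef, hkdef]; linear_combination T * hrr
  refine ⟨k, hk0, B, ?_, ?_, ?_, ?_⟩
  · -- nonnegativity
    intro i j
    rw [hBsplit i j, hsrr]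
    have h3 := habs i j
    have h4 := neg_abs_le (G i j)
    nlinarith [mul_self_nonneg r]
  · -- row sums
    intro i
    have h2 : ∑ j, B i j = (B *ᵥ fun _ => (1 : ℝ)) i := by
      simp [Matrix.mulVec, dotProduct]
    rw [h2, hBdef, ← Matrix.mulVec_mulVec, ← Matrix.mulVec_mulVec, hones]
    simp only [Matrix.mulVec_smul]
    rw [hHu, hDdl]
    simp only [Matrix.mulVec_smul]
    rw [hHdl]
    simp only [Pi.smul_apply, smul_eq_mul, hudef]
    rw [← hsdef]
    linear_combination s * hqr
  · -- column sums
    intro j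
    have h2 : ∑ i, B i j = ((fun _ => (1 : ℝ)) ᵥ* B) j := by
      simp [Matrix.vecMul, dotProduct]
    rw [h2, hBdef, ← Matrix.vecMul_vecMul, ← Matrix.vecMul_vecMul, hvH, hvH, hones]
    simp only [Matrix.mulVec_smul, Matrix.smul_vecMul]
    rw [hHu, hdlD]
    simp only [Matrix.mulVec_smul, Matrix.smul_vecMul]
    rw [hHdl]
    simp only [Pi.smul_apply, smul_eq_mul, hudef]
    rw [← hsdef]
    linear_combination s * hqr
  · -- charpoly identity
    have hcpD : D.charpoly = (X - C s) * p := by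
      rw [hDdef, Matrix.charpoly_reindex, Matrix.charpoly_fromBlocks_zero₁₂, hM]
      congr 1
      rw [Matrix.charpoly, Matrix.det_fin_one, charmatrix_apply_eq, Matrix.of_apply]
    have hcpB : B.charpoly = (X - C s) * p := by
      rw [hBdef, aux_charpoly_conj _ _ hHH, hcpD]
    rw [hcpB, hp, hsdef]
    ring
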